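/- arXiv:0811.2889 — 2 statements merged into one kernel-verified Lean document; each statement's English description precedes it below -/
import Mathlib

section
/- Let q : ℝ → ℍ be a differentiable curve of unit quaternions, x⃗′ ∈ ℝ³ a constant vector, and x(t) = q(t) ∘ (0, x⃗′) ∘ conj(q(t)). Writing 2 q̇ ∘ q̄ = (0, ω⃗), the time derivative of the imaginary part of x satisfies ẋ⃗ = ω⃗ × x⃗. -/
open Matrix

/-- The imaginary (vector) part of a quaternion as a vector in ℝ³. -/
def quatIm (q : Quaternion ℝ) : Fin 3 → ℝ := ![q.imI, q.imJ, q.imK]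

/-- Build a quaternion from a real scalar and a vector in ℝ³. -/
def quatMk (r : ℝ) (v : Fin 3 → ℝ) : Quaternion ℝ := ⟨r, v 0, v 1, v 2⟩

private instance : StarModule ℝ (Quaternion ℝ) :=
  ⟨fun r x => by ext <;> simp⟩

private lemma hasDerivAt_lm (L : Quaternion ℝ →ₗ[ℝ] ℝ) {f : ℝ → Quaternion ℝ}
    {f' : Quaternion ℝ} {t : ℝ} (h : HasDerivAt f f' t) :
    HasDerivAt (fun s => L (f s)) (L f') t := by
  exact L.toContinuousLinearMap.hasFDerivAt.comp_hasDerivAt t h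

theorem fixed_frame_angular_velocity (q : ℝ → Quaternion ℝ)
    (hdiff : Differentiable ℝ q) (hunit : ∀ t, ‖q t‖ = 1)
    (x' : Fin 3 → ℝ) (x : ℝ → Quaternion ℝ)
    (hx : ∀ t, x t = q t * quatMk 0 x' * star (q t))
    (ω : ℝ → Fin 3 → ℝ)
    (hω : ∀ t, ω t = quatIm (2 * (deriv q t * star (q t)))) (t : ℝ) :
    deriv (fun s => quatIm (x s)) t = crossProduct (ω t) (quatIm (x t)) := by
  have hq : ∀ s, HasDerivAt q (deriv q s) s := fun s => (hdiff s).hasDerivAt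
  set q' := deriv q t with hq'def
  set c := quatMk 0 x' with hc
  have hqs : ∀ s, q s * star (q s) = 1 := by
    intro s
    have hn : Quaternion.normSq (q s) = 1 := by
      rw [Quaternion.normSq_eq_norm_mul_self, hunit s]; ring
    rw [Quaternion.self_mul_star, hn]; simp
  have hsq : star (q t) * q t = 1 := by
    rw [star_comm_self', hqs t]
  have hstar : HasDerivAt (fun s => star (q s)) (star q') t := (hq t).star
  -- derivative of x
  have hxd : HasDerivAt x (q' * c * star (q t) + q t * c * star q') t := by
    have h := ((hq t).mul_const c).mul hstar
    have hfun : (fun s => q s * c * star (q s)) = x := by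
      funext s; rw [hx s]
    rw [← hfun]
    exact h
  -- derivative of the constant q * star q = 1
  have hzero : q' * star (q t) + q t * star q' = 0 := by
    have h0 : HasDerivAt (fun s => q s * star (q s)) (q' * star (q t) + q t * star q') t :=
      (hq t).mul hstar
    have hconst : (fun s => q s * star (q s)) = fun _ => (1 : Quaternion ℝ) := funext hqs
    rw [hconst] at h0
    exact h0.unique (hasDerivAt_const t 1)
  set p := q' * star (q t) with hp
  have hqsq' : q t * star q' = -p :=
    eq_neg_of_add_eq_zero_left (by rw [add_comm]; exact hzero)
  have e1 : p * x t = q' * c * star (q t) := by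
    rw [hx t, hp]
    calc q' * star (q t) * (q t * c * star (q t))
        = q' * (star (q t) * q t) * (c * star (q t)) := by noncomm_ring
      _ = q' * c * star (q t) := by rw [hsq]; noncomm_ring
  have e2 : q t * c * star q' = -(x t * p) := by
    have h2 : x t * (q t * star q') = q t * c * star q' := by
      rw [hx t]
      calc q t * c * star (q t) * (q t * star q')
          = q t * c * ((star (q t) * q t) * star q') := by noncomm_ring
        _ = q t * c * star q' := by rw [hsq]; noncomm_ring
    rw [← h2, hqsq', mul_neg]
  have hD : HasDerivAt x (p * x t - x t * p) t := by
    have h := hxd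
    rw [← e1, e2] at h
    simpa [sub_eq_add_neg] using h
  have hI : HasDerivAt (fun s => (x s).imI) ((p * x t - x t * p).imI) t := by
    exact hasDerivAt_lm (QuaternionAlgebra.imIₗ _ _ _) hD
  have hJ : HasDerivAt (fun s => (x s).imJ) ((p * x t - x t * p).imJ) t := by
    exact hasDerivAt_lm (QuaternionAlgebra.imJₗ _ _ _) hD
  have hK : HasDerivAt (fun s => (x s).imK) ((p * x t - x t * p).imK) t := by
    exact hasDerivAt_lm (QuaternionAlgebra.imKₗ _ _ _) hD
  have hpi : HasDerivAt (fun s => quatIm (x s)) (quatIm (p * x t - x t * p)) t := by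
    apply hasDerivAt_pi.2
    intro i
    fin_cases i
    · simpa [quatIm] using hI
    · simpa [quatIm] using hJ
    · simpa [quatIm] using hK
  rw [hpi.deriv, hω t, ← hq'def, ← hp, two_mul]
  funext i
  fin_cases i <;>
    simp [quatIm, cross_apply, Quaternion.imI_mul, Quaternion.imJ_mul, Quaternion.imK_mul,
      Quaternion.re_mul] <;>
    ring
end

section
/- Let q : ℝ → ℍ be a differentiable curve of unit quaternions with matrices G(t) built from q(t) and body angular velocity ω⃗′ = 2G𝐪̇. Then the matrix Ω′ = 2GĠᵀ satisfies Ω′ = −2ĠGᵀ and Ω′ v⃗ = ω⃗′ × v⃗ for all v⃗ ∈ ℝ³, i.e. Ω′ is the skew-symmetric cross-product matrix of ω⃗′. -/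
open Matrix

/-- The 3×4 matrix E built from the components of a quaternion. -/
def Emat (q : Quaternion ℝ) : Matrix (Fin 3) (Fin 4) ℝ :=
  !![-q.imI, q.re, -q.imK, q.imJ;
     -q.imJ, q.imK, q.re, -q.imI;
     -q.imK, -q.imJ, q.imI, q.re]

/-- The 3×4 matrix G built from the components of a quaternion. -/
def Gmat (q : Quaternion ℝ) : Matrix (Fin 3) (Fin 4) ℝ :=
  !![-q.imI, q.re, q.imK, -q.imJ;
     -q.imJ, -q.imK, q.re, q.imI;
     -q.imK, q.imJ, -q.imI, q.re]

/-- The quaternion as a coordinate 4-vector. -/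
def quatVec (q : Quaternion ℝ) : Fin 4 → ℝ := ![q.re, q.imI, q.imJ, q.imK]

noncomputable def quatReC : Quaternion ℝ →L[ℝ] ℝ :=
  LinearMap.toContinuousLinearMap (QuaternionAlgebra.reₗ _ _ _)
noncomputable def quatImIC : Quaternion ℝ →L[ℝ] ℝ :=
  LinearMap.toContinuousLinearMap (QuaternionAlgebra.imIₗ _ _ _)
noncomputable def quatImJC : Quaternion ℝ →L[ℝ] ℝ :=
  LinearMap.toContinuousLinearMap (QuaternionAlgebra.imJₗ _ _ _)
noncomputable def quatImKC : Quaternion ℝ →L[ℝ] ℝ :=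
  LinearMap.toContinuousLinearMap (QuaternionAlgebra.imKₗ _ _ _)

theorem Omega_body_is_cross_product_matrix (q : ℝ → Quaternion ℝ)
    (hdiff : Differentiable ℝ q) (hunit : ∀ t, ‖q t‖ = 1)
    (Gdot : ℝ → Matrix (Fin 3) (Fin 4) ℝ)
    (hGdot : ∀ t i j, Gdot t i j = deriv (fun s => Gmat (q s) i j) t)
    (qvecdot : ℝ → Fin 4 → ℝ)
    (hqvecdot : ∀ t i, qvecdot t i = deriv (fun s => quatVec (q s) i) t)
    (ω' : ℝ → Fin 3 → ℝ) (hω : ∀ t, ω' t = (2 : ℝ) • (Gmat (q t) *ᵥ qvecdot t))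
    (t : ℝ) :
    (2 : ℝ) • (Gmat (q t) * (Gdot t)ᵀ) = -((2 : ℝ) • (Gdot t * (Gmat (q t))ᵀ)) ∧
    ∀ v : Fin 3 → ℝ,
      ((2 : ℝ) • (Gmat (q t) * (Gdot t)ᵀ)) *ᵥ v = crossProduct (ω' t) v := by
  have hA : HasDerivAt (fun u => (q u).re) ((deriv q t).re) t := by
    exact
      (quatReC.hasFDerivAt.comp_hasDerivAt t (hdiff t).hasDerivAt)
  have hB : HasDerivAt (fun u => (q u).imI) ((deriv q t).imI) t := by
    exact
      (quatImIC.hasFDerivAt.comp_hasDerivAt t (hdiff t).hasDerivAt)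
  have hC : HasDerivAt (fun u => (q u).imJ) ((deriv q t).imJ) t := by
    exact
      (quatImJC.hasFDerivAt.comp_hasDerivAt t (hdiff t).hasDerivAt)
  have hD : HasDerivAt (fun u => (q u).imK) ((deriv q t).imK) t := by
    exact
      (quatImKC.hasFDerivAt.comp_hasDerivAt t (hdiff t).hasDerivAt)
  -- unit norm and its derivative
  have hnormSq : ∀ s, (q s).re ^ 2 + (q s).imI ^ 2 + (q s).imJ ^ 2 + (q s).imK ^ 2 = 1 := by
    intro s
    have h1 := Quaternion.normSq_eq_norm_mul_self (q s)
    rw [hunit s, mul_one] at h1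
    have h2 := Quaternion.normSq_def' (q s)
    rw [h1] at h2
    linarith
  have horth : (q t).re * (deriv q t).re + (q t).imI * (deriv q t).imI
      + (q t).imJ * (deriv q t).imJ + (q t).imK * (deriv q t).imK = 0 := by
    have hf : HasDerivAt (fun s => (q s).re ^ 2 + (q s).imI ^ 2 + (q s).imJ ^ 2 + (q s).imK ^ 2)
        (2 * ((q t).re * (deriv q t).re + (q t).imI * (deriv q t).imI
          + (q t).imJ * (deriv q t).imJ + (q t).imK * (deriv q t).imK)) t := by
      have h := (((hA.pow 2).add (hB.pow 2)).add (hC.pow 2)).add (hD.pow 2)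
      convert h using 1
      all_goals first | rfl | ring
    have hconst : HasDerivAt (fun s => (q s).re ^ 2 + (q s).imI ^ 2 + (q s).imJ ^ 2
        + (q s).imK ^ 2) 0 t := by
      have he : (fun s => (q s).re ^ 2 + (q s).imI ^ 2 + (q s).imJ ^ 2 + (q s).imK ^ 2)
          = fun _ => (1 : ℝ) := funext fun s => hnormSq s
      rw [he]; exact hasDerivAt_const t 1
    have := hf.unique hconst
    linarith
  have hGd : Gdot t = Gmat (deriv q t) := by
    ext i j
    rw [hGdot t i j]
    fin_cases i <;> fin_cases j <;>
      simp only [Gmat, Matrix.cons_val', Matrix.cons_val_zero, Matrix.cons_val_one,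
        Matrix.head_cons, Matrix.empty_val', Matrix.cons_val_fin_one, Matrix.head_fin_const,
        Matrix.cons_val_two, Matrix.cons_val_three, Matrix.tail_cons, Matrix.of_apply,
        Fin.isValue] <;>
      first
        | exact hA.deriv | exact hB.deriv | exact hC.deriv | exact hD.deriv
        | exact hA.neg.deriv | exact hB.neg.deriv | exact hC.neg.deriv | exact hD.neg.deriv
  have hqd : qvecdot t = quatVec (deriv q t) := by
    ext i
    rw [hqvecdot t i]
    fin_cases i <;>
      simp only [quatVec, Matrix.cons_val_zero, Matrix.cons_val_one, Matrix.head_cons,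
        Matrix.cons_val_two, Matrix.cons_val_three, Matrix.tail_cons, Fin.isValue] <;>
      first
        | exact hA.deriv | exact hB.deriv | exact hC.deriv | exact hD.deriv
  rw [hGd]
  constructor
  · ext i j
    simp only [Gmat, Matrix.smul_apply, Matrix.neg_apply, Matrix.mul_apply,
      Matrix.transpose_apply, Fin.sum_univ_four, smul_eq_mul]
    fin_cases i <;> fin_cases j <;> simp <;> linarith [horth]
  · intro v
    rw [hω t, hqd]
    ext i
    simp only [Gmat, quatVec, crossProduct, Matrix.mulVec, dotProduct, Matrix.smul_apply,
      Pi.smul_apply, Matrix.neg_apply, Matrix.mul_apply, Matrix.transpose_apply,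
      Fin.sum_univ_four, Fin.sum_univ_three, smul_eq_mul, LinearMap.mk₂_apply, LinearMap.coe_mk, AddHom.coe_mk]
    fin_cases i <;> simp [Fin.sum_univ_three] <;>
      first
        | linear_combination (2 * v 0) * horth
        | linear_combination (2 * v 1) * horth
        | linear_combination (2 * v 2) * horth
end
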